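/- arXiv:1301.0664 — 2 statements merged into one kernel-verified Lean document; each statement's English description precedes it below -/
import Mathlib

section
/- Let Y be a finite set of vectors in ℝ^d, Y⁺ = {μ : μ · y ≥ 0 for all y ∈ Y}, and Y⊥ = {μ : μ · y = 0 for all y ∈ Y}. Then Y⊥ ⊆ Y⁺, and if there is no collection of positive scalars λ_y with ∑_{y ∈ Y} λ_y y = 0, then the containment is strict (Y⁺ strictly contains Y⊥). -/
open scoped RealInnerProductSpace

variable {E : Type*} [NormedAddCommGroup E] [InnerProductSpace ℝ E]

/-- Stiemke-type lemma: if every vector in the dual cone of `Y` is orthogonal to `Y`,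
then there is a strictly positive combination of `Y` summing to zero. -/
lemma stiemke_aux [FiniteDimensional ℝ E] :
    ∀ n (Y : Finset E), Y.card ≤ n →
      (∀ μ : E, (∀ v ∈ Y, 0 ≤ ⟪μ, v⟫) → ∀ v ∈ Y, ⟪μ, v⟫ = 0) →
      ∃ lam : E → ℝ, (∀ v ∈ Y, 0 < lam v) ∧ ∑ v ∈ Y, lam v • v = 0 := by
  classical
  intro n
  induction n with
  | zero =>
    intro Y hcard _
    rw [Nat.le_zero, Finset.card_eq_zero] at hcard
    subst hcard
    exact ⟨fun _ => 1, by simp, by simp⟩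
  | succ n ih =>
    intro Y hcard h
    rcases Y.eq_empty_or_nonempty with rfl | hYne
    · exact ⟨fun _ => 1, by simp, by simp⟩
    -- Step 1 : 0 ∈ convexHull Y
    have h0 : (0 : E) ∈ convexHull ℝ (Y : Set E) := by
      by_contra h0
      obtain ⟨f, u, hfu, hb⟩ := geometric_hahn_banach_point_closed
        (convex_convexHull ℝ _) (Y.finite_toSet.isClosed_convexHull ℝ) h0
      set μ := (InnerProductSpace.toDual ℝ E).symm f with hμ
      have hinner : ∀ v : E, ⟪μ, v⟫ = f v := fun v =>
        InnerProductSpace.toDual_symm_apply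
      have hu : (0 : ℝ) < u := by simpa using hfu
      obtain ⟨y, hy⟩ := hYne
      have hpos : ∀ v ∈ Y, 0 ≤ ⟪μ, v⟫ := by
        intro v hv
        rw [hinner]
        exact le_of_lt (lt_trans hu (hb v (subset_convexHull ℝ _ hv)))
      have := h μ hpos y hy
      rw [hinner] at this
      have := hb y (subset_convexHull ℝ _ hy)
      linarith
    rw [Finset.convexHull_eq] at h0
    obtain ⟨w, hw0, hw1, hwc⟩ := h0
    have hwsum : ∑ v ∈ Y, w v • v = 0 := by
      have := Finset.centerMass_eq_of_sum_1 Y id hw1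
      rw [hwc] at this
      simpa using this.symm
    set S : Finset E := Y.filter (fun v => w v ≠ 0) with hSdef
    set Z : Finset E := Y.filter (fun v => w v = 0) with hZdef
    have hSpos : ∀ v ∈ S, 0 < w v := by
      intro v hv
      rw [hSdef, Finset.mem_filter] at hv
      exact lt_of_le_of_ne (hw0 v hv.1) (Ne.symm hv.2)
    have hSne : S.Nonempty := by
      by_contra hS
      rw [Finset.not_nonempty_iff_eq_empty] at hS
      have : ∑ v ∈ Y, w v = 0 := by
        apply Finset.sum_eq_zero
        intro v hv
        by_contra hwv
        have : v ∈ S := by rw [hSdef, Finset.mem_filter]; exact ⟨hv, hwv⟩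
        simp [hS] at this
      rw [hw1] at this; norm_num at this
    have hZcard : Z.card < Y.card := by
      obtain ⟨s, hs⟩ := hSne
      rw [hSdef, Finset.mem_filter] at hs
      apply Finset.card_lt_card
      constructor
      · exact Finset.filter_subset _ _
      · intro hsub
        have := hsub hs.1
        rw [hZdef, Finset.mem_filter] at this
        exact hs.2 this.2
    -- Step 2 : set up the orthogonal projection onto (span S)ᗮ
    set W : Submodule ℝ E := Submodule.span ℝ (S : Set E) with hWdef
    set K : Submodule ℝ E := Wᗮ with hKdef
    set Q : E →L[ℝ] E := K.subtypeL.comp (K.orthogonalProjectionOnto) with hQdef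
    have hQapply : ∀ v : E, Q v = (K.orthogonalProjectionOnto v : E) := fun v => rfl
    have hQadj : ∀ μ v : E, ⟪μ, Q v⟫ = ⟪Q μ, v⟫ := by
      intro μ v
      rw [hQapply, hQapply]
      exact (Submodule.inner_starProjection_left_eq_right K μ v).symm
    have hQmemK : ∀ μ : E, Q μ ∈ K := fun μ => (K.orthogonalProjectionOnto μ).2
    have hQS : ∀ μ : E, ∀ v ∈ S, ⟪Q μ, v⟫ = 0 := by
      intro μ v hv
      have hvW : v ∈ W := Submodule.subset_span hv
      have hmemo : Q μ ∈ Wᗮ := hQmemK μ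
      have := (Submodule.mem_orthogonal W (Q μ)).mp hmemo v hvW
      rwa [real_inner_comm] at this
    -- Step 3 : the hypothesis descends to the projected set Z.image Q
    have hZhyp : ∀ μ : E, (∀ u ∈ Z.image (fun v => Q v), 0 ≤ ⟪μ, u⟫) →
        ∀ u ∈ Z.image (fun v => Q v), ⟪μ, u⟫ = 0 := by
      intro μ hμ
      have hν : ∀ v ∈ Y, 0 ≤ ⟪Q μ, v⟫ := by
        intro v hv
        by_cases hwv : w v = 0
        · have hvZ : v ∈ Z := by rw [hZdef, Finset.mem_filter]; exact ⟨hv, hwv⟩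
          rw [← hQadj]
          exact hμ _ (Finset.mem_image_of_mem _ hvZ)
        · have hvS : v ∈ S := by rw [hSdef, Finset.mem_filter]; exact ⟨hv, hwv⟩
          rw [hQS μ v hvS]
      have hν0 := h (Q μ) hν
      rintro u hu
      rw [Finset.mem_image] at hu
      obtain ⟨v, hvZ, rfl⟩ := hu
      rw [hQadj]
      exact hν0 v (Finset.filter_subset _ _ hvZ)
    have hZicard : (Z.image (fun v => Q v)).card ≤ n := by
      calc (Z.image (fun v => Q v)).card ≤ Z.card := Finset.card_image_le
        _ ≤ n := by omega
    obtain ⟨lam', hlam'pos, hlam'sum⟩ := ih (Z.image (fun v => Q v)) hZicard hZhyp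
    -- Step 4 : pull the combination back to Z
    set c : E → ℝ := fun v => lam' (Q v) / (Z.filter (fun x => Q x = Q v)).card with hcdef
    have hcpos : ∀ v ∈ Z, 0 < c v := by
      intro v hv
      apply div_pos (hlam'pos _ (Finset.mem_image_of_mem _ hv))
      have : v ∈ Z.filter (fun x => Q x = Q v) := by
        rw [Finset.mem_filter]; exact ⟨hv, rfl⟩
      exact_mod_cast Finset.card_pos.mpr ⟨v, this⟩
    have hsumZ : ∑ v ∈ Z, c v • Q v = 0 := by
      rw [← hlam'sum]
      symm
      apply Finset.sum_image'
      intro b hb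
      have hfib : ∀ x ∈ Z.filter (fun x => Q x = Q b), c x • Q x = c b • Q b := by
        intro x hx
        rw [Finset.mem_filter] at hx
        have hQxb : Q x = Q b := hx.2
        have : (Z.filter (fun y => Q y = Q x)) = (Z.filter (fun y => Q y = Q b)) := by
          apply Finset.filter_congr
          intro y _
          simp [hQxb]
        rw [hcdef]
        simp only [hQxb, this]
      rw [Finset.sum_congr rfl hfib, Finset.sum_const]
      rw [hcdef]
      have hcard : (0 : ℝ) < (Z.filter (fun y => Q y = Q b)).card := by
        have : b ∈ Z.filter (fun y => Q y = Q b) := by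
          rw [Finset.mem_filter]; exact ⟨hb, rfl⟩
        exact_mod_cast Finset.card_pos.mpr ⟨b, this⟩
      rw [← Nat.cast_smul_eq_nsmul ℝ, smul_smul]
      congr 1
      field_simp
    set x : E := ∑ v ∈ Z, c v • v with hxdef
    have hQx : Q x = 0 := by
      rw [hxdef, map_sum]
      rw [← hsumZ]
      apply Finset.sum_congr rfl
      intro v _
      rw [map_smul]
    have hxW : x ∈ W := by
      have h1 : K.orthogonalProjectionOnto x = 0 := by
        have : ((K.orthogonalProjectionOnto x : K) : E) = 0 := hQx
        exact_mod_cast Subtype.ext this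
      have h2 : x ∈ Kᗮ := Submodule.orthogonalProjectionOnto_eq_zero_iff.mp h1
      rw [hKdef] at h2
      rwa [Submodule.orthogonal_orthogonal] at h2
    rw [hWdef, Submodule.mem_span_finset] at hxW
    obtain ⟨f, -, hf⟩ := hxW
    -- Step 5 : assemble the final coefficients
    set t : ℝ := S.sup' hSne (fun v => (f v + 1) / w v) with htdef
    have ht : ∀ v ∈ S, f v < t * w v := by
      intro v hv
      have h1 : (f v + 1) / w v ≤ t := Finset.le_sup' (fun v => (f v + 1) / w v) hv
      have h2 : 0 < w v := hSpos v hv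
      have : f v + 1 ≤ t * w v := by
        rw [div_le_iff₀ h2] at h1
        linarith
      linarith
    refine ⟨fun v => if w v = 0 then c v else t * w v - f v, ?_, ?_⟩
    · intro v hv
      by_cases hwv : w v = 0
      · simp only [if_pos hwv]
        exact hcpos v (by rw [hZdef, Finset.mem_filter]; exact ⟨hv, hwv⟩)
      · simp only [if_neg hwv]
        have : v ∈ S := by rw [hSdef, Finset.mem_filter]; exact ⟨hv, hwv⟩
        linarith [ht v this]
    · rw [← Finset.sum_filter_add_sum_filter_not Y (fun v => w v = 0)]
      have hZpart : ∑ v ∈ Y.filter (fun v => w v = 0),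
          (if w v = 0 then c v else t * w v - f v) • v = x := by
        rw [hxdef, ← hZdef]
        apply Finset.sum_congr rfl
        intro v hv
        rw [hZdef, Finset.mem_filter] at hv
        rw [if_pos hv.2]
      have hSsum : ∑ v ∈ S, w v • v = 0 := by
        rw [hSdef, Finset.sum_filter_of_ne, hwsum]
        intro v _ hne hwv
        apply hne
        rw [hwv, zero_smul]
      have hSpart : ∑ v ∈ Y.filter (fun v => ¬ w v = 0),
          (if w v = 0 then c v else t * w v - f v) • v = -x := by
        have : ∑ v ∈ S, (t * w v - f v) • v = -x := by
          have expand : ∀ v, (t * w v - f v) • v = t • (w v • v) - f v • v := by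
            intro v
            rw [sub_smul, smul_smul]
        
          simp_rw [expand]
          rw [Finset.sum_sub_distrib, ← Finset.smul_sum, hSsum, smul_zero, hf]
          rw [zero_sub]
        rw [← this, hSdef]
        apply Finset.sum_congr rfl
        intro v hv
        rw [Finset.mem_filter] at hv
        rw [if_neg hv.2]
      rw [hZpart, hSpart, add_neg_cancel]

theorem stmt_1 (d : ℕ) (Y : Finset (EuclideanSpace ℝ (Fin d))) (hY : Y.Nonempty) :
    {μ : EuclideanSpace ℝ (Fin d) | ∀ v ∈ Y, ⟪μ, v⟫ = 0} ⊆
      {μ : EuclideanSpace ℝ (Fin d) | ∀ v ∈ Y, 0 ≤ ⟪μ, v⟫} ∧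
    ((¬ ∃ lam : EuclideanSpace ℝ (Fin d) → ℝ,
        (∀ v ∈ Y, 0 < lam v) ∧ ∑ v ∈ Y, lam v • v = 0) →
      {μ : EuclideanSpace ℝ (Fin d) | ∀ v ∈ Y, ⟪μ, v⟫ = 0} ⊂
        {μ : EuclideanSpace ℝ (Fin d) | ∀ v ∈ Y, 0 ≤ ⟪μ, v⟫}) := by
  have hsub : {μ : EuclideanSpace ℝ (Fin d) | ∀ v ∈ Y, ⟪μ, v⟫ = 0} ⊆
      {μ : EuclideanSpace ℝ (Fin d) | ∀ v ∈ Y, 0 ≤ ⟪μ, v⟫} := by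
    intro μ hμ v hv
    exact (hμ v hv).ge
  refine ⟨hsub, fun hno => ?_⟩
  rw [Set.ssubset_def]
  refine ⟨hsub, fun hsub' => ?_⟩
  apply hno
  exact stiemke_aux Y.card Y le_rfl (fun μ hμ => hsub' hμ)
end

section
/- Let β, γ, δ be real angles not multiples of π, and let μ, μ' be complex numbers of modulus 1 with μ ≠ 1. The 4×4 complex matrix with rows (1, cos β, cos γ, cos δ), (0, sin β, sin γ, sin δ), (1, μ' cos β, μ'μ cos γ, μ cos δ), (0, μ' sin β, μ'μ sin γ, μ sin δ) is singular if and only if A μ'² + B μ' + A = 0, where A = cot β − cot γ and B = −2 cot β + (2 − 2Re(μ)) cot δ + 2Re(μ) cot γ; moreover when A ≠ 0 there is a solution μ' of modulus 1 if and only if |B/(2A)| ≤ 1, in which case Re(μ') = −B/(2A). -/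
private lemma det_fin_four' (M : Matrix (Fin 4) (Fin 4) ℂ) : M.det =
    M 0 0 * (M 1 1 * (M 2 2 * M 3 3 - M 2 3 * M 3 2) - M 1 2 * (M 2 1 * M 3 3 - M 2 3 * M 3 1) +
      M 1 3 * (M 2 1 * M 3 2 - M 2 2 * M 3 1)) -
    M 0 1 * (M 1 0 * (M 2 2 * M 3 3 - M 2 3 * M 3 2) - M 1 2 * (M 2 0 * M 3 3 - M 2 3 * M 3 0) +
      M 1 3 * (M 2 0 * M 3 2 - M 2 2 * M 3 0)) +
    M 0 2 * (M 1 0 * (M 2 1 * M 3 3 - M 2 3 * M 3 1) - M 1 1 * (M 2 0 * M 3 3 - M 2 3 * M 3 0) +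
      M 1 3 * (M 2 0 * M 3 1 - M 2 1 * M 3 0)) -
    M 0 3 * (M 1 0 * (M 2 1 * M 3 2 - M 2 2 * M 3 1) - M 1 1 * (M 2 0 * M 3 2 - M 2 2 * M 3 0) +
      M 1 2 * (M 2 0 * M 3 1 - M 2 1 * M 3 0)) := by
  rw [Matrix.det_succ_row_zero]
  simp [Fin.sum_univ_succ, Matrix.det_fin_three, Fin.succAbove, Matrix.submatrix_apply,
    show ((2:Fin 3).succ : Fin 4) = 3 from rfl, show ((2:Fin 3).castSucc : Fin 4) = 2 from rfl]
  ring


theorem stmt_19 (β γ δ : ℝ)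
    (hβ : ∀ n : ℤ, β ≠ n * Real.pi) (hγ : ∀ n : ℤ, γ ≠ n * Real.pi)
    (hδ : ∀ n : ℤ, δ ≠ n * Real.pi)
    (μ : ℂ) (hμ : ‖μ‖ = 1) (hμ1 : μ ≠ 1)
    (A B : ℝ)
    (hA : A = Real.cot β - Real.cot γ)
    (hB : B = -2 * Real.cot β + (2 - 2 * μ.re) * Real.cot δ + 2 * μ.re * Real.cot γ) :
    (∀ μ' : ℂ, ‖μ'‖ = 1 →
      ((!![1, (Real.cos β : ℂ), (Real.cos γ : ℂ), (Real.cos δ : ℂ);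
           0, (Real.sin β : ℂ), (Real.sin γ : ℂ), (Real.sin δ : ℂ);
           1, μ' * Real.cos β, μ' * μ * Real.cos γ, μ * Real.cos δ;
           0, μ' * Real.sin β, μ' * μ * Real.sin γ, μ * Real.sin δ] :
          Matrix (Fin 4) (Fin 4) ℂ).det = 0 ↔
        (A : ℂ) * μ' ^ 2 + (B : ℂ) * μ' + (A : ℂ) = 0)) ∧
    (A ≠ 0 →
      ((∃ μ' : ℂ, ‖μ'‖ = 1 ∧
          (A : ℂ) * μ' ^ 2 + (B : ℂ) * μ' + (A : ℂ) = 0) ↔ |B / (2 * A)| ≤ 1) ∧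
      ∀ μ' : ℂ, ‖μ'‖ = 1 →
        (A : ℂ) * μ' ^ 2 + (B : ℂ) * μ' + (A : ℂ) = 0 →
        μ'.re = -B / (2 * A)) := by
  have hsb : Real.sin β ≠ 0 := Real.sin_ne_zero_iff.mpr (fun n => (hβ n ∘ Eq.symm))
  have hsg : Real.sin γ ≠ 0 := Real.sin_ne_zero_iff.mpr (fun n => (hγ n ∘ Eq.symm))
  have hsd : Real.sin δ ≠ 0 := Real.sin_ne_zero_iff.mpr (fun n => (hδ n ∘ Eq.symm))
  have hsbC : (Real.sin β : ℂ) ≠ 0 := by exact_mod_cast hsb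
  have hsgC : (Real.sin γ : ℂ) ≠ 0 := by exact_mod_cast hsg
  have hsdC : (Real.sin δ : ℂ) ≠ 0 := by exact_mod_cast hsd
  have hμ0 : μ ≠ 0 := by
    intro h; rw [h] at hμ; simp at hμ
  have hconj : μ * (starRingEnd ℂ) μ = 1 := by
    rw [Complex.mul_conj]
    rw [Complex.normSq_eq_norm_sq, hμ]; norm_num
  have hre : 2 * (μ.re : ℂ) * μ = μ ^ 2 + 1 := by
    have h2 : μ + (starRingEnd ℂ) μ = 2 * (μ.re : ℂ) := by
      rw [Complex.add_conj]; push_cast; ring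
    calc 2 * (μ.re : ℂ) * μ = (μ + (starRingEnd ℂ) μ) * μ := by rw [h2]
      _ = μ ^ 2 + μ * (starRingEnd ℂ) μ := by ring
      _ = μ ^ 2 + 1 := by rw [hconj]
  constructor
  · intro μ' _
    have hdet :
        (!![1, (Real.cos β : ℂ), (Real.cos γ : ℂ), (Real.cos δ : ℂ);
           0, (Real.sin β : ℂ), (Real.sin γ : ℂ), (Real.sin δ : ℂ);
           1, μ' * Real.cos β, μ' * μ * Real.cos γ, μ * Real.cos δ;
           0, μ' * Real.sin β, μ' * μ * Real.sin γ, μ * Real.sin δ] :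
          Matrix (Fin 4) (Fin 4) ℂ).det
        = (Real.sin β : ℂ) * (Real.sin γ : ℂ) * (Real.sin δ : ℂ) * μ *
          ((A : ℂ) * μ' ^ 2 + (B : ℂ) * μ' + (A : ℂ)) := by
      have hAr : A * (Real.sin β * Real.sin γ)
          = Real.cos β * Real.sin γ - Real.cos γ * Real.sin β := by
        rw [hA, Real.cot_eq_cos_div_sin, Real.cot_eq_cos_div_sin]
        field_simp
      have hBr : B * (Real.sin β * Real.sin γ * Real.sin δ)
          = -2 * Real.cos β * Real.sin γ * Real.sin δ
            + (2 - 2 * μ.re) * Real.sin β * Real.sin γ * Real.cos δ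
            + 2 * μ.re * Real.sin β * Real.cos γ * Real.sin δ := by
        rw [hB, Real.cot_eq_cos_div_sin, Real.cot_eq_cos_div_sin, Real.cot_eq_cos_div_sin]
        field_simp
      have hAC := congrArg (Complex.ofReal) hAr
      have hBC := congrArg (Complex.ofReal) hBr
      push_cast [-Complex.ofReal_sin, -Complex.ofReal_cos] at hAC hBC
      rw [det_fin_four']
      simp only [Matrix.cons_val', Matrix.cons_val_zero, Matrix.cons_val_one, Matrix.cons_val_two,
        Matrix.cons_val_three, Matrix.head_cons, Matrix.vecHead, Matrix.vecTail, Matrix.of_apply,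
        Matrix.cons_val_fin_one, Matrix.empty_val', Matrix.head_fin_const, Function.comp_apply,
        Matrix.cons_val_succ]
      linear_combination (-(Real.sin δ : ℂ) * μ * (μ' ^ 2 + 1)) * hAC - (μ * μ') * hBC
        - μ' * ((Real.sin β : ℂ) * Real.cos γ * Real.sin δ
            - (Real.sin β : ℂ) * Real.sin γ * Real.cos δ) * hre
    rw [hdet]
    constructor
    · intro h
      rcases mul_eq_zero.mp h with h1 | h2
      · exfalso
        rcases mul_eq_zero.mp h1 with h3 | h4
        · rcases mul_eq_zero.mp h3 with h5 | h6
          · exact (mul_ne_zero hsbC hsgC) h5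
          · exact hsdC h6
        · exact hμ0 h4
      · exact h2
    · intro h; rw [h, mul_zero]
  · intro hA0
    have hA0C : (A : ℂ) ≠ 0 := by exact_mod_cast hA0
    have key : ∀ μ' : ℂ, ‖μ'‖ = 1 →
        (A : ℂ) * μ' ^ 2 + (B : ℂ) * μ' + (A : ℂ) = 0 → μ'.re = -B / (2 * A) := by
      intro μ' hμ' hq
      have hμ'0 : μ' ≠ 0 := by intro h; rw [h] at hμ'; simp at hμ'
      have hc : μ' * (starRingEnd ℂ) μ' = 1 := by
        rw [Complex.mul_conj, Complex.normSq_eq_norm_sq, hμ']; norm_num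
      have h2 : μ' + (starRingEnd ℂ) μ' = 2 * (μ'.re : ℂ) := by
        rw [Complex.add_conj]; push_cast; ring
      have hfac : μ' * ((A : ℂ) * (2 * (μ'.re : ℂ)) + (B : ℂ)) = 0 := by
        rw [← h2]
        linear_combination hq + (A : ℂ) * hc
      have h3 : (A : ℂ) * (2 * (μ'.re : ℂ)) + (B : ℂ) = 0 :=
        (mul_eq_zero.mp hfac).resolve_left hμ'0
      have h4 : ((A * (2 * μ'.re) + B : ℝ) : ℂ) = 0 := by push_cast; linear_combination h3
      have h5 : A * (2 * μ'.re) + B = 0 := by exact_mod_cast h4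
      field_simp
      linarith
    refine ⟨⟨?_, ?_⟩, key⟩
    · rintro ⟨μ', hμ', hq⟩
      have := key μ' hμ' hq
      have h1 : |μ'.re| ≤ 1 := by
        have := Complex.abs_re_le_norm μ'
        rwa [hμ'] at this
      rw [this] at h1
      rwa [neg_div, abs_neg] at h1
    · intro hle
      set x : ℝ := -B / (2 * A) with hx
      have hle' : |x| ≤ 1 := by rwa [hx, neg_div, abs_neg]
      have hx2 : x ^ 2 ≤ 1 := by
        nlinarith [sq_abs x, abs_nonneg x, hle']
      have hy2 : Real.sqrt (1 - x ^ 2) ^ 2 = 1 - x ^ 2 :=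
        Real.sq_sqrt (by linarith)
      have hss : x * x + Real.sqrt (1 - x ^ 2) * Real.sqrt (1 - x ^ 2) = 1 := by
        nlinarith [hy2]
      set z : ℂ := ⟨x, Real.sqrt (1 - x ^ 2)⟩ with hz
      refine ⟨z, ?_, ?_⟩
      · rw [Complex.norm_def, hz, Complex.normSq_mk, hss]
        exact Real.sqrt_one
      · have hzc : z * (starRingEnd ℂ) z = 1 := by
          rw [Complex.mul_conj, hz, Complex.normSq_mk, hss]
          norm_num
        have hzr : z + (starRingEnd ℂ) z = 2 * (x : ℂ) := by
          rw [Complex.add_conj]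
          have : z.re = x := rfl
          rw [this]
          push_cast
          ring
        have hBx : B = -(2 * A) * x := by
          rw [hx]; field_simp
        have hBC2 : (B : ℂ) = -(2 * (A : ℂ)) * (x : ℂ) := by
          rw [hBx]; push_cast; ring
        linear_combination (-(A : ℂ)) * hzc + (A : ℂ) * z * hzr + z * hBC2
end
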